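/- Let (X, B, ν, T) be an invertible ergodic measure-preserving system, Y ⊂ X with ν(Y) > 0, T̃ the first return map to Y with return time r: Y → ℕ, f: X → ℝ measurable, and f̂(x) = Σ_{j=0}^{r(x)−1} f(Tʲx) the induced cocycle on Y. If there exists ĥ: Y → ℝ with f̂(x) = ĥ(T̃x) − ĥ(x) for all x ∈ Y, then there exists h: X → ℝ with f(y) = h(Ty) − h(y) for ν-almost every y ∈ X. -/

import Mathlib

open MeasureTheory

/-- If the induced cocycle `f̂ x = ∑_{j<r x} f (T^j x)` over the first return map
`T̃ = T^[r ·]` to `Y` is a coboundary (with transfer function `ĥ`), then `f` is a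
coboundary for `T` almost everywhere. -/
theorem induced_coboundary_extends
    {X : Type*} [MeasurableSpace X] (ν : Measure X) [IsProbabilityMeasure ν]
    (T : X ≃ X) (hTmeas : Measurable T) (hTinvmeas : Measurable T.symm)
    (hErg : Ergodic T ν)
    (Y : Set X) (hYmeas : MeasurableSet Y) (hYpos : ν Y ≠ 0)
    (r : X → ℕ)
    (hr : ∀ x ∈ Y, 1 ≤ r x ∧ (⇑T)^[r x] x ∈ Y ∧
      ∀ m : ℕ, 1 ≤ m → m < r x → (⇑T)^[m] x ∉ Y)
    (f : X → ℝ) (hfmeas : Measurable f)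
    (fhat : X → ℝ) (hfhat : ∀ x ∈ Y, fhat x = ∑ j ∈ Finset.range (r x), f ((⇑T)^[j] x))
    (hhat : X → ℝ) (hcob : ∀ x ∈ Y, fhat x = hhat ((⇑T)^[r x] x) - hhat x) :
    ∃ h : X → ℝ, ∀ᵐ y ∂ν, f y = h (T y) - h y := by
  classical
  -- cancellation lemma
  have hcancel : ∀ (n : ℕ) (x : X), (⇑T)^[n] ((⇑T.symm)^[n] x) = x :=
    fun n x => (Function.LeftInverse.iterate T.apply_symm_apply n) x
  -- shift lemma: for k ≤ n, T^[k] (T.symm^[n] x) = T.symm^[n-k] x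
  have hshift : ∀ (k n : ℕ), k ≤ n → ∀ x : X,
      (⇑T)^[k] ((⇑T.symm)^[n] x) = (⇑T.symm)^[n - k] x := by
    intro k n hkn x
    have : (⇑T.symm)^[n] x = (⇑T.symm)^[k] ((⇑T.symm)^[n - k] x) := by
      rw [← Function.iterate_add_apply]
      congr 1
      omega
    rw [this, hcancel]
  -- the set of points whose backward orbit hits Y
  set P : X → Prop := fun x => ∃ n : ℕ, (⇑T.symm)^[n] x ∈ Y with hP
  have hPT : ∀ x, P x → P (T x) := by
    rintro x ⟨n, hn⟩
    exact ⟨n + 1, by simpa [Function.iterate_succ_apply, T.symm_apply_apply] using hn⟩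
  -- the transfer function
  set h : X → ℝ := fun x =>
    if hx : P x then
      hhat ((⇑T.symm)^[Nat.find hx] x) +
        ∑ j ∈ Finset.range (Nat.find hx), f ((⇑T)^[j] ((⇑T.symm)^[Nat.find hx] x))
    else 0 with hhdef
  refine ⟨h, ?_⟩
  -- pointwise identity on {P}
  have key : ∀ x, P x → f x = h (T x) - h x := by
    intro x hx
    have hx' : P (T x) := hPT x hx
    set n := Nat.find hx with hn
    set y := (⇑T.symm)^[n] x with hy
    have hyY : y ∈ Y := Nat.find_spec hx
    have hmin : ∀ k, k < n → (⇑T.symm)^[k] x ∉ Y := fun k hk => Nat.find_min hx hk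
    have hTny : (⇑T)^[n] y = x := hcancel n x
    have hTn1y : (⇑T)^[n + 1] y = T x := by
      rw [Function.iterate_succ_apply', hTny]
    -- T^[k] y ∉ Y for 1 ≤ k ≤ n
    have hmid : ∀ k, 1 ≤ k → k ≤ n → (⇑T)^[k] y ∉ Y := by
      intro k hk1 hkn
      rw [hy, hshift k n hkn]
      exact hmin (n - k) (by omega)
    have hxval : h x = hhat y + ∑ j ∈ Finset.range n, f ((⇑T)^[j] y) := by
      rw [hhdef]; simp only [dif_pos hx]; rfl
    by_cases hTxY : T x ∈ Y
    · -- return time of y is n+1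
      obtain ⟨hr1, hrY, hrmin⟩ := hr y hyY
      have hry : r y = n + 1 := by
        by_contra hne
        rcases lt_or_gt_of_ne hne with hlt | hgt
        · exact hmid (r y) hr1 (by omega) hrY
        · exact hrmin (n + 1) (by omega) (by omega) (hTn1y ▸ hTxY)
      have hsum : ∑ j ∈ Finset.range (n + 1), f ((⇑T)^[j] y)
          = hhat (T x) - hhat y := by
        have := (hfhat y hyY).symm.trans (hcob y hyY)
        rwa [hry, hTn1y] at this
      have hfind0 : Nat.find hx' = 0 := by
        rw [Nat.find_eq_zero]; simpa using hTxY
      have hTxval : h (T x) = hhat (T x) := by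
        rw [hhdef]; simp [dif_pos hx', hfind0]
      rw [hTxval, hxval, Finset.sum_range_succ] at *
      have := hsum
      rw [hTny] at this
      linarith
    · -- least backward hitting time of T x is n+1
      have hfind : Nat.find hx' = n + 1 := by
        have hle : Nat.find hx' ≤ n + 1 := Nat.find_le (by
          simpa [Function.iterate_succ_apply, T.symm_apply_apply] using hyY)
        have hge : ¬ Nat.find hx' < n + 1 := by
          intro hlt
          have hspec := Nat.find_spec hx'
          rcases Nat.eq_zero_or_pos (Nat.find hx') with h0 | hpos
          · rw [h0] at hspec; exact hTxY (by simpa using hspec)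
          · have : (⇑T.symm)^[Nat.find hx'] (T x)
                = (⇑T.symm)^[Nat.find hx' - 1] x := by
              conv_lhs => rw [show Nat.find hx' = (Nat.find hx' - 1) + 1 by omega]
              rw [Function.iterate_succ_apply, T.symm_apply_apply]
            rw [this] at hspec
            exact hmin _ (by omega) hspec
        omega
      have hbase : (⇑T.symm)^[Nat.find hx'] (T x) = y := by
        rw [hfind, Function.iterate_succ_apply, T.symm_apply_apply]
      rw [hfind] at hbase
      have hTxval : h (T x) = hhat y + ∑ j ∈ Finset.range (n + 1), f ((⇑T)^[j] y) := by
        rw [hhdef]; simp only [dif_pos hx', hfind, hbase]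
      rw [hTxval, hxval, Finset.sum_range_succ, hTny]
      ring
  -- a.e. every point satisfies P
  have hAmeas : MeasurableSet {x | P x} := by
    have : {x | P x} = ⋃ n : ℕ, (fun x => (⇑T.symm)^[n] x) ⁻¹' Y := by
      ext x; simp [hP]
    rw [this]
    exact MeasurableSet.iUnion fun n => (hTinvmeas.iterate n) hYmeas
  have hsub : {x | P x} ≤ᵐ[ν] ⇑T ⁻¹' {x | P x} :=
    Filter.Eventually.of_forall fun x hx => hPT x hx
  rcases hErg.ae_empty_or_univ_of_ae_le_preimage' hAmeas.nullMeasurableSet hsub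
      (measure_ne_top ν _) with hempty | huniv
  · exfalso
    apply hYpos
    have hYsub : Y ⊆ {x | P x} := fun x hxY => ⟨0, by simpa using hxY⟩
    have : ν {x | P x} = 0 := by
      simpa using measure_congr hempty
    exact measure_mono_null hYsub this
  · have hae : ∀ᵐ x ∂ν, P x := by
      rw [Filter.eventuallyEq_univ] at huniv
      exact huniv
    filter_upwards [hae] with x hx using key x hx
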